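/- Let $R$ be a commutative ring and for $w = (a_1,\ldots,a_{m+1}; b_1,\ldots,b_{m+1}) \in \{0,1\}^{2(m+1)}$ let $\mathcal{J}_w = J_{(a_1,b_1)} \otimes \cdots \otimes J_{(a_{m+1},b_{m+1})} \in M_{2^{m+1}}(R)$, where $J_{(a,b)} = D^a P^b$ with $D = \mathrm{diag}(1,-1)$ and $P$ the swap matrix. Let $K = DP \otimes I_{2^m}$ and $q(w) = \sum_{i=1}^{m+1} a_i b_i + a_1 + b_1 \pmod 2$. If $q(w) = 1$, then $\mathcal{J}_w K + K \mathcal{J}_w^T = 0$, i.e., $\mathcal{J}_w$ lies in the symplectic Lie algebra $\mathfrak{sp}_{2^{m+1}}(R)$ defined by the form $K$. -/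

import Mathlib

/-- `J (a, b) = D^a * P^b` where `D = diag(1,-1)` and `P` is the swap matrix. -/
def Jmat (R : Type*) [CommRing R] (a b : Fin 2) : Matrix (Fin 2) (Fin 2) R :=
  (!![1, 0; 0, -1] : Matrix (Fin 2) (Fin 2) R) ^ (a : ℕ)
    * (!![0, 1; 1, 0] : Matrix (Fin 2) (Fin 2) R) ^ (b : ℕ)

/-- The iterated Kronecker product `J_{(a₁,b₁)} ⊗ ⋯ ⊗ J_{(a_{m+1},b_{m+1})}`,
realized on the index set `Fin (m+1) → Fin 2` (of cardinality `2^(m+1)`):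
its `(x, y)` entry is the product of the corresponding entries of the factors. -/
def Jten {R : Type*} [CommRing R] {m : ℕ} (w : Fin (m + 1) → Fin 2 × Fin 2) :
    Matrix (Fin (m + 1) → Fin 2) (Fin (m + 1) → Fin 2) R :=
  fun x y => ∏ i, Jmat R (w i).1 (w i).2 (x i) (y i)


lemma sum_pi_prod {R : Type*} [CommRing R] {n : ℕ} (f : Fin n → Fin 2 → R) :
    ∑ z : Fin n → Fin 2, ∏ i, f i (z i) = ∏ i, ∑ t, f i t := by
  rw [Finset.prod_univ_sum, Fintype.piFinset_univ]

lemma keyfac {R : Type*} [CommRing R] (a b c x y : Fin 2) :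
    ∑ t, Jmat R a b x t * Jmat R c c t y
      = (-1 : R) ^ ((a : ℕ) * (b : ℕ) + (c : ℕ) * ((a : ℕ) + (b : ℕ)))
        * ∑ t, Jmat R c c x t * Jmat R a b y t := by
  fin_cases a <;> fin_cases b <;> fin_cases c <;> fin_cases x <;> fin_cases y <;>
    simp [Jmat, Fin.sum_univ_two, Matrix.mul_apply, Matrix.one_apply] <;> ring

theorem Jten_mem_sp {R : Type*} [CommRing R] {m : ℕ}
    (w : Fin (m + 1) → Fin 2 × Fin 2)
    -- `K = DP ⊗ I_{2^m}`
    (K : Matrix (Fin (m + 1) → Fin 2) (Fin (m + 1) → Fin 2) R)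
    (hK : K = Jten (fun i => if i = 0 then ((1 : Fin 2), (1 : Fin 2)) else (0, 0)))
    (hq : ((∑ i, ((w i).1 : ℕ) * ((w i).2 : ℕ) + ((w 0).1 : ℕ) + ((w 0).2 : ℕ) : ℕ) : ZMod 2)
      = 1) :
    Jten w * K + K * Matrix.transpose (Jten w) = 0 := by
  set c : Fin (m + 1) → Fin 2 := fun i => if i = 0 then 1 else 0 with hc
  set A : Fin (m + 1) → Matrix (Fin 2) (Fin 2) R := fun i => Jmat R (w i).1 (w i).2 with hA
  set B : Fin (m + 1) → Matrix (Fin 2) (Fin 2) R := fun i => Jmat R (c i) (c i) with hB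
  have hKB : K = fun x y => ∏ i, B i (x i) (y i) := by
    rw [hK]; funext x y
    refine Finset.prod_congr rfl fun i _ => ?_
    by_cases h : i = 0 <;> simp [Jten, hB, hc, h]
  set e : Fin (m + 1) → ℕ :=
    fun i => ((w i).1 : ℕ) * ((w i).2 : ℕ) + (c i : ℕ) * (((w i).1 : ℕ) + ((w i).2 : ℕ))
    with he
  have hsume : Odd (∑ i, e i) := by
    have heq : ∑ i, e i
        = (∑ i, ((w i).1 : ℕ) * ((w i).2 : ℕ)) + (((w 0).1 : ℕ) + ((w 0).2 : ℕ)) := by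
      rw [he]
      simp only [Finset.sum_add_distrib]
      congr 1
      have h5 : ∀ i : Fin (m + 1), ((c i : ℕ) * (((w i).1 : ℕ) + ((w i).2 : ℕ)))
          = if i = 0 then (((w i).1 : ℕ) + ((w i).2 : ℕ)) else 0 := by
        intro i; by_cases h : i = 0 <;> simp [hc, h]
      rw [Finset.sum_congr rfl fun i _ => h5 i, Finset.sum_ite_eq' _ (0 : Fin (m + 1))]
      simp
    have h2 : (((∑ i, e i : ℕ)) : ZMod 2) = 1 := by
      rw [heq, ← add_assoc]; exact_mod_cast hq
    rw [← ZMod.natCast_mod] at h2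
    rcases Nat.mod_two_eq_zero_or_one (∑ i, e i) with h | h
    · rw [h] at h2; exact absurd h2 (by decide)
    · exact Nat.odd_iff.mpr h
  have h4 : Jten w * K = -(K * Matrix.transpose (Jten w)) := by
    ext x y
    simp only [Matrix.mul_apply, Matrix.neg_apply, Matrix.transpose_apply]
    simp only [hKB, Jten, ← hA]
    have h1 : ∑ z : Fin (m + 1) → Fin 2,
        (∏ i, A i (x i) (z i)) * ∏ i, B i (z i) (y i)
          = ∏ i, ∑ t, A i (x i) t * B i t (y i) := by
      rw [← sum_pi_prod fun i t => A i (x i) t * B i t (y i)]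
      exact Finset.sum_congr rfl fun z _ => (Finset.prod_mul_distrib).symm
    have h2 : ∑ z : Fin (m + 1) → Fin 2,
        (∏ i, B i (x i) (z i)) * ∏ i, A i (y i) (z i)
          = ∏ i, ∑ t, B i (x i) t * A i (y i) t := by
      rw [← sum_pi_prod fun i t => B i (x i) t * A i (y i) t]
      exact Finset.sum_congr rfl fun z _ => (Finset.prod_mul_distrib).symm
    have h3 : ∀ i : Fin (m + 1), ∑ t, A i (x i) t * B i t (y i)
        = (-1 : R) ^ e i * ∑ t, B i (x i) t * A i (y i) t := fun i =>
      keyfac (w i).1 (w i).2 (c i) (x i) (y i)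
    rw [h1, h2, Finset.prod_congr rfl fun i _ => h3 i, Finset.prod_mul_distrib,
      Finset.prod_pow_eq_pow_sum, hsume.neg_one_pow, neg_one_mul]
  rw [h4, neg_add_cancel]
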